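/- (Patterson's theorem) Let N ≥ 1 and let A, B ⊆ [0,N-1]. Then A and B are homometric if and only if their complements A^c = [0,N-1] \ A and B^c = [0,N-1] \ B are homometric. -/

import Mathlib

/-- The cyclic distance `d(i,j) = min(|i-j|, N-|i-j|)` on `ZMod N`. -/
def cdist {N : ℕ} (i j : ZMod N) : ℕ := min (i - j).val (j - i).val

/-- The cyclic difference multiset `A - B = {d(i,j) : i ∈ A, j ∈ B}`. -/
def diffMS {N : ℕ} (A B : Finset (ZMod N)) : Multiset ℕ :=
  (A ×ˢ B).val.map fun p => cdist p.1 p.2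

/-- The self difference multiset `A - A = {d(i,j) : i ≤ j ∈ A}`. -/
def selfDiffMS {N : ℕ} (A : Finset (ZMod N)) : Multiset ℕ :=
  ((A ×ˢ A).filter fun p => p.1.val ≤ p.2.val).val.map fun p => cdist p.1 p.2

/-- Two subsets are homometric if they have the same self difference multiset. -/
def Homometric {N : ℕ} (A B : Finset (ZMod N)) : Prop :=
  selfDiffMS A = selfDiffMS B

/-- `σ : ZMod N → ZMod N` is given by the action of an element of the dihedral
group `D_{2N}`, generated by the rotation `i ↦ i + 1` and the reflection `i ↦ -i`. -/
def IsDihedral {N : ℕ} (σ : ZMod N → ZMod N) : Prop :=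
  (∃ k : ZMod N, ∀ i, σ i = i + k) ∨ (∃ k : ZMod N, ∀ i, σ i = -i + k)

/-- Two subsets are equivalent if one is the image of the other under `D_{2N}`. -/
def EquivSets {N : ℕ} (A B : Finset (ZMod N)) : Prop :=
  ∃ σ : ZMod N → ZMod N, IsDihedral σ ∧ B = A.image σ

/-- An ordered partition of `[0, N-1]`: pairwise disjoint sets covering everything. -/
def IsPartitionOf {N K : ℕ} [NeZero N] (A : Fin K → Finset (ZMod N)) : Prop :=
  (∀ i j, i ≠ j → Disjoint (A i) (A j)) ∧ Finset.univ.biUnion A = Finset.univ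

/-- Two ordered partitions are homometric if `A i - A j = B i - B j` for all pairs. -/
def HomometricPart {N K : ℕ} (A B : Fin K → Finset (ZMod N)) : Prop :=
  ∀ i j, diffMS (A i) (A j) = diffMS (B i) (B j)

/-- Two ordered partitions are equivalent if a single dihedral element maps one to the other. -/
def EquivPart {N K : ℕ} (A B : Fin K → Finset (ZMod N)) : Prop :=
  ∃ σ : ZMod N → ZMod N, IsDihedral σ ∧ ∀ i, B i = (A i).image σ

/-- Two ordered partitions are pseudo-equivalent if each part is mapped by some
(possibly different) dihedral element. -/
def PseudoEquivPart {N K : ℕ} (A B : Fin K → Finset (ZMod N)) : Prop :=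
  ∀ i, ∃ σ : ZMod N → ZMod N, IsDihedral σ ∧ B i = (A i).image σ

/-- The periodic autocorrelation `a_x[ℓ] = ∑ x[n] x[n+ℓ]`. -/
noncomputable def autocorr {N : ℕ} [NeZero N] (x : ZMod N → ℝ) (ℓ : ZMod N) : ℝ :=
  ∑ n : ZMod N, x n * x (n + ℓ)

open Classical in
/-- The level set `{i : x[i] = a}` of a signal. -/
noncomputable def levelSet {N : ℕ} [NeZero N] (x : ZMod N → ℝ) (a : ℝ) : Finset (ZMod N) :=
  Finset.univ.filter fun i => x i = a

namespace PAux

variable {N : ℕ}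

lemma cdist_comm (i j : ZMod N) : cdist i j = cdist j i := min_comm _ _

lemma cdist_shift (i j : ZMod N) : cdist i j = cdist 0 (j - i) := by
  unfold cdist
  rw [zero_sub, neg_sub, sub_zero]

lemma cdist_eq_zero [NeZero N] {i j : ZMod N} : cdist i j = 0 ↔ i = j := by
  unfold cdist
  rw [Nat.min_eq_zero_iff, ZMod.val_eq_zero, ZMod.val_eq_zero, sub_eq_zero, sub_eq_zero]
  constructor
  · rintro (h | h) <;> simp [h]
  · intro h; simp [h]

/-- full ordered count -/
def Mg [NeZero N] (A B : Finset (ZMod N)) (d : ℕ) : ℕ :=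
  ((A ×ˢ B).filter fun p => cdist p.1 p.2 = d).card

/-- half (self) count -/
def m [NeZero N] (A : Finset (ZMod N)) (d : ℕ) : ℕ :=
  ((A ×ˢ A).filter fun p => p.1.val ≤ p.2.val ∧ cdist p.1 p.2 = d).card

/-- number of ℓ at distance d from 0 -/
def r (N : ℕ) [NeZero N] (d : ℕ) : ℕ :=
  (Finset.univ.filter fun ℓ : ZMod N => cdist 0 ℓ = d).card

lemma count_selfDiffMS [NeZero N] (A : Finset (ZMod N)) (d : ℕ) :
    (selfDiffMS A).count d = m A d := by
  rw [selfDiffMS, Multiset.count_map, m, ← Finset.filter_val, Finset.filter_filter]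
  rw [← Finset.card_def]
  congr 1
  apply Finset.filter_congr
  intro p _
  simp [eq_comm]


lemma Mg_split_left [NeZero N] (A B : Finset (ZMod N)) (d : ℕ) :
    Mg A B d + Mg Aᶜ B d = Mg Finset.univ B d := by
  unfold Mg
  rw [← Finset.card_union_of_disjoint, ← Finset.filter_union, ← Finset.union_product,
    Finset.union_compl]
  · exact Finset.disjoint_filter_filter <| Finset.disjoint_left.2 fun p hp hp' => by
      simp only [Finset.mem_product, Finset.mem_compl] at hp hp'
      exact hp'.1 hp.1

lemma Mg_split_right [NeZero N] (A B : Finset (ZMod N)) (d : ℕ) :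
    Mg A B d + Mg A Bᶜ d = Mg A Finset.univ d := by
  unfold Mg
  rw [← Finset.card_union_of_disjoint, ← Finset.filter_union, ← Finset.product_union,
    Finset.union_compl]
  · exact Finset.disjoint_filter_filter <| Finset.disjoint_left.2 fun p hp hp' => by
      simp only [Finset.mem_product, Finset.mem_compl] at hp hp'
      exact hp'.2 hp.2

lemma fiber_card [NeZero N] (i : ZMod N) (d : ℕ) :
    (Finset.univ.filter fun j : ZMod N => cdist i j = d).card = r N d := by
  unfold r
  apply Finset.card_nbij' (fun j => j - i) (fun ℓ => ℓ + i)
  · intro j hj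
    simp only [Finset.coe_filter, Set.mem_setOf_eq, Finset.mem_filter, Finset.mem_univ, true_and] at hj ⊢
    rw [← cdist_shift]; exact hj
  · intro ℓ hℓ
    simp only [Finset.coe_filter, Set.mem_setOf_eq, Finset.mem_filter, Finset.mem_univ, true_and] at hℓ ⊢
    rw [cdist_shift]; simpa using hℓ
  · intro j _; simp
  · intro ℓ _; simp

lemma Mg_left_univ [NeZero N] (A : Finset (ZMod N)) (d : ℕ) :
    Mg A Finset.univ d = A.card * r N d := by
  unfold Mg
  rw [Finset.card_filter, Finset.sum_product]
  rw [Finset.sum_congr rfl (fun i _ => ?_), Finset.sum_const, smul_eq_mul]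
  rw [← Finset.card_filter, fiber_card]

lemma Mg_right_univ [NeZero N] (A : Finset (ZMod N)) (d : ℕ) :
    Mg Finset.univ A d = A.card * r N d := by
  unfold Mg
  rw [Finset.card_filter, Finset.sum_product, Finset.sum_comm]
  rw [Finset.sum_congr rfl (fun j _ => ?_), Finset.sum_const, smul_eq_mul]
  rw [← Finset.card_filter, ← fiber_card j d]
  congr 1
  apply Finset.filter_congr
  intro i _
  simp [cdist_comm]


lemma m_zero [NeZero N] (A : Finset (ZMod N)) : m A 0 = A.card := by
  unfold m
  apply Finset.card_nbij' (fun p => p.1) (fun i => (i, i))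
  · intro p hp
    simp only [Finset.mem_coe, Finset.mem_filter, Finset.mem_product] at hp
    exact hp.1.1
  · intro i hi
    simp only [Finset.mem_coe, Finset.mem_filter, Finset.mem_product]
    exact ⟨⟨hi, hi⟩, le_refl _, cdist_eq_zero.2 rfl⟩
  · intro p hp
    simp only [Finset.mem_coe, Finset.mem_filter, Finset.mem_product] at hp
    have := cdist_eq_zero.1 hp.2.2
    ext <;> simp [this]
  · intro i _; rfl

lemma Mg_zero [NeZero N] (A : Finset (ZMod N)) : Mg A A 0 = A.card := by
  unfold Mg
  apply Finset.card_nbij' (fun p => p.1) (fun i => (i, i))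
  · intro p hp
    simp only [Finset.mem_coe, Finset.mem_filter, Finset.mem_product] at hp
    exact hp.1.1
  · intro i hi
    simp only [Finset.mem_coe, Finset.mem_filter, Finset.mem_product]
    exact ⟨⟨hi, hi⟩, cdist_eq_zero.2 rfl⟩
  · intro p hp
    simp only [Finset.mem_coe, Finset.mem_filter, Finset.mem_product] at hp
    have := cdist_eq_zero.1 hp.2
    ext <;> simp [this]
  · intro i _; rfl

lemma Mg_eq_two_m [NeZero N] (A : Finset (ZMod N)) {d : ℕ} (hd : d ≠ 0) :
    Mg A A d = 2 * m A d := by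
  have key : ((A ×ˢ A).filter fun p => ¬(p.1.val ≤ p.2.val) ∧ cdist p.1 p.2 = d).card
      = ((A ×ˢ A).filter fun p => p.1.val ≤ p.2.val ∧ cdist p.1 p.2 = d).card := by
    apply Finset.card_nbij' Prod.swap Prod.swap
    · intro p hp
      simp only [Finset.mem_coe, Finset.mem_filter, Finset.mem_product, Prod.fst_swap, Prod.snd_swap] at hp ⊢
      exact ⟨⟨hp.1.2, hp.1.1⟩, le_of_lt (lt_of_not_ge hp.2.1), by rw [cdist_comm]; exact hp.2.2⟩
    · intro p hp
      simp only [Finset.mem_coe, Finset.mem_filter, Finset.mem_product, Prod.fst_swap, Prod.snd_swap] at hp ⊢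
      refine ⟨⟨hp.1.2, hp.1.1⟩, ?_, by rw [cdist_comm]; exact hp.2.2⟩
      have hne : p.1 ≠ p.2 := fun h => hd (by rw [← hp.2.2, cdist_eq_zero.2 h])
      have : p.1.val ≠ p.2.val := fun h => hne (ZMod.val_injective N h)
      omega
    · intro p _; rfl
    · intro p _; rfl
  have split := Finset.card_filter_add_card_filter_not
    (s := (A ×ˢ A).filter fun p => cdist p.1 p.2 = d)
    (p := fun p => p.1.val ≤ p.2.val)
  unfold Mg m
  rw [Finset.filter_filter, Finset.filter_filter] at split
  have h1 : ((A ×ˢ A).filter fun p => cdist p.1 p.2 = d ∧ p.1.val ≤ p.2.val).card = m A d := by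
    unfold m; congr 1; apply Finset.filter_congr; intro p _; simp [and_comm]
  have h2 : ((A ×ˢ A).filter fun p => cdist p.1 p.2 = d ∧ ¬(p.1.val ≤ p.2.val)).card = m A d := by
    unfold m; rw [← key]; congr 1
    apply Finset.filter_congr; intro p _; simp [and_comm]
  unfold m at h1 h2
  omega


lemma selfDiff_compl [NeZero N] (A B : Finset (ZMod N))
    (h : selfDiffMS A = selfDiffMS B) : selfDiffMS Aᶜ = selfDiffMS Bᶜ := by
  have hm : ∀ d, m A d = m B d := fun d => by
    rw [← count_selfDiffMS, ← count_selfDiffMS, h]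
  have hcard : A.card = B.card := by rw [← m_zero A, ← m_zero B, hm 0]
  have hM : ∀ d, Mg A A d = Mg B B d := by
    intro d
    rcases eq_or_ne d 0 with rfl | hd
    · rw [Mg_zero, Mg_zero, hcard]
    · rw [Mg_eq_two_m A hd, Mg_eq_two_m B hd, hm d]
  have hMc : ∀ d, Mg Aᶜ Aᶜ d = Mg Bᶜ Bᶜ d := by
    intro d
    have a1 := Mg_split_left A Finset.univ d
    have a2 := Mg_split_right Aᶜ A d
    have a3 := Mg_split_left A A d
    have b1 := Mg_split_left B Finset.univ d
    have b2 := Mg_split_right Bᶜ B d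
    have b3 := Mg_split_left B B d
    have e1 : Mg A Finset.univ d = Mg B Finset.univ d := by
      rw [Mg_left_univ, Mg_left_univ, hcard]
    have e2 : Mg Finset.univ A d = Mg Finset.univ B d := by
      rw [Mg_right_univ, Mg_right_univ, hcard]
    have hMd := hM d
    omega
  have hmc : ∀ d, m Aᶜ d = m Bᶜ d := by
    intro d
    rcases eq_or_ne d 0 with rfl | hd
    · rw [m_zero, m_zero, Finset.card_compl, Finset.card_compl, hcard]
    · have := hMc d
      rw [Mg_eq_two_m Aᶜ hd, Mg_eq_two_m Bᶜ hd] at this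
      omega
  refine Multiset.ext.2 fun d => ?_
  rw [count_selfDiffMS, count_selfDiffMS, hmc d]

end PAux


/-- Patterson's theorem. -/
theorem patterson (N : ℕ) [NeZero N] (A B : Finset (ZMod N)) :
    Homometric A B ↔ Homometric Aᶜ Bᶜ := by
  constructor
  · exact fun h => PAux.selfDiff_compl A B h
  · intro h
    have := PAux.selfDiff_compl Aᶜ Bᶜ h
    rwa [compl_compl, compl_compl] at this
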